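/- Let F be a field with a valuation v : F → Γ₀ into a linearly ordered commutative group with zero, and let π ∈ F satisfy v(π) > 1. Let g ∈ SL₂(F) have entries g = [[x, y], [z, w]] (so xw − yz = 1). Then g lies in the double coset I · D' · I, where D' = [[π⁻¹, 0], [0, π]] and I is the Iwahori subgroup, if and only if v(x) < v(π), v(y) ≤ v(π), v(z) < v(π), and v(w) = v(π). -/

import Mathlib

/-- Membership in the Iwahori subgroup of `SL₂` of a valued field: a matrix of determinant `1`,
entries of valuation at most `1`, and lower-left entry of valuation strictly less than `1`
(i.e. a matrix over the valuation ring whose residue is upper triangular). -/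
def IwahoriMem {F Γ₀ : Type*} [Field F] [LinearOrderedCommGroupWithZero Γ₀]
    (v : Valuation F Γ₀) (m : Matrix (Fin 2) (Fin 2) F) : Prop :=
  m.det = 1 ∧ v (m 0 0) ≤ 1 ∧ v (m 0 1) ≤ 1 ∧ v (m 1 0) < 1 ∧ v (m 1 1) ≤ 1

/-- Let `g = [[x, y], [z, w]] ∈ SL₂(F)` and `v(π) > 1`.  Then `g ∈ I · [[π⁻¹, 0], [0, π]] · I`
iff `v(x) < v(π)`, `v(y) ≤ v(π)`, `v(z) < v(π)` and `v(w) = v(π)`. -/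
theorem mem_iwahori_double_coset_diag_inv_iff
    {F Γ₀ : Type*} [Field F] [LinearOrderedCommGroupWithZero Γ₀]
    (v : Valuation F Γ₀) (π : F) (hπ : 1 < v π)
    (x y z w : F) (hdet : x * w - y * z = 1) :
    (∃ i₁ i₂ : Matrix (Fin 2) (Fin 2) F, IwahoriMem v i₁ ∧ IwahoriMem v i₂ ∧
        !![x, y; z, w] = i₁ * !![π⁻¹, 0; 0, π] * i₂) ↔
      v x < v π ∧ v y ≤ v π ∧ v z < v π ∧ v w = v π := by
  have hπ0 : v π ≠ 0 := fun h => by simp [h] at hπ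
  have hπne : π ≠ 0 := fun h => by simp [h] at hπ0
  have hπinv : v π⁻¹ < 1 := by
    rw [map_inv₀]
    exact inv_lt_one_of_one_lt₀ hπ
  constructor
  · rintro ⟨i₁, i₂, ⟨hd1, ha, hb, hc, hdd⟩, ⟨hd2, he, hf, hg, hh⟩, heq⟩
    set a := i₁ 0 0; set b := i₁ 0 1; set c := i₁ 1 0; set d := i₁ 1 1
    set e := i₂ 0 0; set f := i₂ 0 1; set g := i₂ 1 0; set h := i₂ 1 1
    rw [Matrix.det_fin_two] at hd1 hd2
    -- entrywise formulas
    have key : ∀ i j, (!![x, y; z, w] : Matrix (Fin 2) (Fin 2) F) i j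
        = (i₁ * !![π⁻¹, 0; 0, π] * i₂) i j := fun i j => by rw [heq]
    have hx : x = a * π⁻¹ * e + b * π * g := by
      have := key 0 0
      simpa [Matrix.mul_apply, Fin.sum_univ_succ] using this
    have hy : y = a * π⁻¹ * f + b * π * h := by
      have := key 0 1
      simpa [Matrix.mul_apply, Fin.sum_univ_succ] using this
    have hz : z = c * π⁻¹ * e + d * π * g := by
      have := key 1 0
      simpa [Matrix.mul_apply, Fin.sum_univ_succ] using this
    have hw : w = c * π⁻¹ * f + d * π * h := by
      have := key 1 1
      simpa [Matrix.mul_apply, Fin.sum_univ_succ] using this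
    -- v a = v d = 1, v e = v h = 1
    have had : v a * v d = 1 := by
      have h1 : v (a * d) = 1 := by
        have : a * d = 1 + b * c := by linear_combination hd1
        rw [this, v.map_add_eq_of_lt_left]
        · exact v.map_one
        rw [v.map_one, v.map_mul]
        calc v b * v c ≤ 1 * v c := mul_le_mul' hb le_rfl
          _ = v c := one_mul _
          _ < 1 := hc
      rwa [v.map_mul] at h1
    have hva : v a = 1 := le_antisymm ha (by
      by_contra hlt
      push_neg at hlt
      have := mul_lt_mul_of_le_of_lt_of_nonneg_of_pos hdd hlt zero_le' (zero_lt_iff.mpr one_ne_zero)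
      rw [mul_comm] at this
      simp [had] at this)
    have hvd : v d = 1 := by
      have := had; rw [hva, one_mul] at this; exact this
    have heh : v e * v h = 1 := by
      have h1 : v (e * h) = 1 := by
        have : e * h = 1 + f * g := by linear_combination hd2
        rw [this, v.map_add_eq_of_lt_left]
        · exact v.map_one
        rw [v.map_one, v.map_mul]
        calc v f * v g ≤ 1 * v g := mul_le_mul' hf le_rfl
          _ = v g := one_mul _
          _ < 1 := hg
      rwa [v.map_mul] at h1
    have hvh : v h = 1 := le_antisymm hh (by
      by_contra hlt
      push_neg at hlt
      have := mul_lt_mul_of_le_of_lt_of_nonneg_of_pos he hlt zero_le' (zero_lt_iff.mpr one_ne_zero)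
      simp [heh] at this)
    -- bounds
    have bnd1 : ∀ s t : F, v s ≤ 1 → v t ≤ 1 → v (s * π⁻¹ * t) < v π := fun s t hs ht => by
      rw [v.map_mul, v.map_mul]
      calc v s * v π⁻¹ * v t ≤ 1 * v π⁻¹ * 1 := by
            exact mul_le_mul' (mul_le_mul' hs le_rfl) ht
        _ = v π⁻¹ := by rw [one_mul, mul_one]
        _ < 1 := hπinv
        _ < v π := hπ
    have bnd2 : ∀ s t : F, v s ≤ 1 → v t < 1 → v (s * π * t) < v π := fun s t hs ht => by
      rw [v.map_mul, v.map_mul]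
      calc v s * v π * v t ≤ 1 * v π * v t := by
            exact mul_le_mul' (mul_le_mul' hs le_rfl) le_rfl
        _ = v π * v t := by rw [one_mul]
        _ < v π * 1 := mul_lt_mul_of_le_of_lt_of_nonneg_of_pos le_rfl ht zero_le' (zero_lt_iff.mpr hπ0)
        _ = v π := mul_one _
    have bnd3 : ∀ s t : F, v s ≤ 1 → v t ≤ 1 → v (s * π * t) ≤ v π := fun s t hs ht => by
      rw [v.map_mul, v.map_mul]
      calc v s * v π * v t ≤ 1 * v π * 1 := by
            exact mul_le_mul' (mul_le_mul' hs le_rfl) ht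
        _ = v π := by rw [one_mul, mul_one]
    refine ⟨?_, ?_, ?_, ?_⟩
    · rw [hx]
      exact lt_of_le_of_lt (v.map_add _ _)
        (max_lt (bnd1 a e ha he) (bnd2 b g hb hg))
    · rw [hy]
      exact le_trans (v.map_add _ _)
        (max_le (le_of_lt (bnd1 a f ha hf)) (bnd3 b h hb hh))
    · rw [hz]
      exact lt_of_le_of_lt (v.map_add _ _)
        (max_lt (bnd1 c e (le_of_lt hc) he) (bnd2 d g hdd hg))
    · rw [hw]
      have h1 : v (d * π * h) = v π := by
        rw [v.map_mul, v.map_mul, hvd, hvh, one_mul, mul_one]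
      rw [v.map_add_eq_of_lt_right, h1]
      rw [h1]
      exact bnd1 c f (le_of_lt hc) hf
  · rintro ⟨hx, hy, hz, hw⟩
    have hw0 : w ≠ 0 := fun h => by rw [h, v.map_zero] at hw; exact hπ0 hw.symm
    refine ⟨!![π / w, y / π; 0, w / π], !![1, 0; z / w, 1], ⟨?_, ?_, ?_, ?_, ?_⟩,
      ⟨?_, ?_, ?_, ?_, ?_⟩, ?_⟩
    · rw [Matrix.det_fin_two]
      show π / w * (w / π) - y / π * 0 = 1
      field_simp
      simp
    · show v (π / w) ≤ 1
      rw [div_eq_mul_inv, v.map_mul, map_inv₀, hw]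
      simp [hπ0]
    · show v (y / π) ≤ 1
      rw [div_eq_mul_inv, v.map_mul, map_inv₀]
      calc v y * (v π)⁻¹ ≤ v π * (v π)⁻¹ :=
            mul_le_mul' hy le_rfl
        _ = 1 := mul_inv_cancel₀ hπ0
    · show v (0 : F) < 1
      rw [v.map_zero]
      exact zero_lt_one
    · show v (w / π) ≤ 1
      rw [div_eq_mul_inv, v.map_mul, map_inv₀, hw]
      simp [hπ0]
    · rw [Matrix.det_fin_two]; simp
    · simp
    · simp
    · show v (z / w) < 1
      rw [div_eq_mul_inv, v.map_mul, map_inv₀, hw, mul_comm]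
      calc (v π)⁻¹ * v z < (v π)⁻¹ * v π := mul_lt_mul_of_le_of_lt_of_nonneg_of_pos le_rfl hz zero_le' (zero_lt_iff.mpr (inv_ne_zero hπ0))
        _ = 1 := inv_mul_cancel₀ hπ0
    · simp
    · ext i j
      fin_cases i <;> fin_cases j <;>
        simp [Matrix.mul_apply, Fin.sum_univ_succ] <;> field_simp <;>
        first
          | linear_combination hdet
          | linear_combination π * w * hdet
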